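/- For z, w ∈ ℝ define f_z(w) = √(2π) e^{w²/2} Φ(w) Φ̄(z) if w ≤ z and f_z(w) = √(2π) e^{w²/2} Φ(z) Φ̄(w) if w > z, where Φ is the standard normal CDF and Φ̄ = 1 - Φ. Then for all z, w ∈ ℝ, |z · f_z(w)| ≤ 1. -/

import Mathlib

open MeasureTheory Real

/-- The standard normal cumulative distribution function. -/
noncomputable def stdNormalCDF (z : ℝ) : ℝ :=
  ∫ t in Set.Iic z, (Real.sqrt (2 * Real.pi))⁻¹ * Real.exp (-t ^ 2 / 2)

open Set Filter

lemma sqrt2pi_pos : 0 < Real.sqrt (2 * Real.pi) := Real.sqrt_pos.2 (by positivity)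

lemma gauss_integrable : Integrable fun s : ℝ => Real.exp (-s ^ 2 / 2) := by
  have h := integrable_exp_neg_mul_sq (show (0:ℝ) < 1/2 by norm_num)
  have : (fun s : ℝ => Real.exp (-s ^ 2 / 2)) = fun s : ℝ => Real.exp (-(1/2) * s ^ 2) := by
    funext s; ring_nf
  rw [this]; exact h

lemma gauss_total : ∫ s : ℝ, Real.exp (-s ^ 2 / 2) = Real.sqrt (2 * Real.pi) := by
  have h := integral_gaussian (1/2 : ℝ)
  have e1 : (fun s : ℝ => Real.exp (-s ^ 2 / 2)) = fun s : ℝ => Real.exp (-(1/2) * s ^ 2) := by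
    funext s; ring_nf
  rw [e1, h, show Real.pi / (1/2 : ℝ) = 2 * Real.pi by ring]

lemma gauss_Ioi_zero : ∫ s in Ioi (0:ℝ), Real.exp (-s ^ 2 / 2) = Real.sqrt (2 * Real.pi) / 2 := by
  have h := integral_gaussian_Ioi (1/2 : ℝ)
  have e1 : (fun s : ℝ => Real.exp (-s ^ 2 / 2)) = fun s : ℝ => Real.exp (-(1/2) * s ^ 2) := by
    funext s; ring_nf
  rw [e1, h, show Real.pi / (1/2 : ℝ) = 2 * Real.pi by ring]

lemma cdf_eq (t : ℝ) :
    stdNormalCDF t = (Real.sqrt (2 * Real.pi))⁻¹ * ∫ s in Iic t, Real.exp (-s ^ 2 / 2) := by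
  rw [stdNormalCDF, integral_const_mul]

lemma cdf_nonneg (t : ℝ) : 0 ≤ stdNormalCDF t := by
  refine setIntegral_nonneg measurableSet_Iic fun s _ => ?_
  positivity

lemma cdf_compl (t : ℝ) :
    1 - stdNormalCDF t = (Real.sqrt (2 * Real.pi))⁻¹ * ∫ s in Ioi t, Real.exp (-s ^ 2 / 2) := by
  have h := intervalIntegral.integral_Iic_add_Ioi (b := t) gauss_integrable.integrableOn gauss_integrable.integrableOn
  rw [gauss_total] at h
  rw [cdf_eq]
  have h2 : (∫ s in Ioi t, Real.exp (-s ^ 2 / 2))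
      = Real.sqrt (2 * Real.pi) - ∫ s in Iic t, Real.exp (-s ^ 2 / 2) := by linarith
  rw [h2, mul_sub, inv_mul_cancel₀ sqrt2pi_pos.ne']

lemma cdf_le_one (t : ℝ) : stdNormalCDF t ≤ 1 := by
  have h := cdf_compl t
  have h2 : 0 ≤ (Real.sqrt (2 * Real.pi))⁻¹ * ∫ s in Ioi t, Real.exp (-s ^ 2 / 2) := by
    have : 0 ≤ ∫ s in Ioi t, Real.exp (-s ^ 2 / 2) :=
      setIntegral_nonneg measurableSet_Ioi fun s _ => (Real.exp_pos _).le
    positivity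
  linarith

lemma gauss_hasDerivAt (x : ℝ) :
    HasDerivAt (fun s : ℝ => Real.exp (-s ^ 2 / 2)) (-x * Real.exp (-x ^ 2 / 2)) x := by
  have h1 : HasDerivAt (fun s : ℝ => -s ^ 2 / 2) (-x) x := by
    have := ((hasDerivAt_pow 2 x).neg).div_const 2
    refine this.congr_deriv ?_
    simp; ring
  have := h1.exp
  convert this using 1
  ring

lemma xgauss_integrable : Integrable fun s : ℝ => s * Real.exp (-s ^ 2 / 2) := by
  have h := integrable_mul_exp_neg_mul_sq (show (0:ℝ) < 1/2 by norm_num)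
  have : (fun s : ℝ => s * Real.exp (-s ^ 2 / 2)) = fun s : ℝ => s * Real.exp (-(1/2) * s ^ 2) := by
    funext s; ring_nf
  rw [this]; exact h

lemma tendsto_gauss_atTop : Tendsto (fun s : ℝ => Real.exp (-s ^ 2 / 2)) atTop (nhds 0) := by
  have h1 : Tendsto (fun s : ℝ => s ^ 2 / 2) atTop atTop :=
    (tendsto_pow_atTop two_ne_zero).atTop_div_const (by norm_num)
  have := Real.tendsto_exp_neg_atTop_nhds_zero.comp h1
  convert this using 2 with s
  simp [Function.comp]; ring_nf

lemma tendsto_gauss_atBot : Tendsto (fun s : ℝ => Real.exp (-s ^ 2 / 2)) atBot (nhds 0) := by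
  have h0 : Tendsto (fun s : ℝ => -s) atBot atTop := tendsto_neg_atBot_atTop
  have h1 : Tendsto (fun s : ℝ => (-s) ^ 2 / 2) atBot atTop :=
    ((tendsto_pow_atTop two_ne_zero).atTop_div_const (by norm_num)).comp h0
  have := Real.tendsto_exp_neg_atTop_nhds_zero.comp h1
  convert this using 2 with s
  simp [Function.comp]; ring_nf

lemma intIoi (t : ℝ) :
    ∫ s in Ioi t, s * Real.exp (-s ^ 2 / 2) = Real.exp (-t ^ 2 / 2) := by
  have hderiv : ∀ x ∈ Ici t, HasDerivAt (fun s : ℝ => -Real.exp (-s ^ 2 / 2))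
      (x * Real.exp (-x ^ 2 / 2)) x := by
    intro x _
    have := (gauss_hasDerivAt x).neg
    refine this.congr_deriv ?_
    ring
  have := integral_Ioi_of_hasDerivAt_of_tendsto' hderiv
    xgauss_integrable.integrableOn (tendsto_gauss_atTop.neg)
  rw [this]; simp

lemma intIic (t : ℝ) :
    ∫ s in Iic t, -s * Real.exp (-s ^ 2 / 2) = Real.exp (-t ^ 2 / 2) := by
  have hderiv : ∀ x ∈ Iic t, HasDerivAt (fun s : ℝ => Real.exp (-s ^ 2 / 2))
      (-x * Real.exp (-x ^ 2 / 2)) x := fun x _ => gauss_hasDerivAt x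
  have hint : IntegrableOn (fun x : ℝ => -x * Real.exp (-x ^ 2 / 2)) (Iic t) := by
    have := (xgauss_integrable.neg).integrableOn (s := Iic t)
    convert this using 1
    funext x; simp
  have := integral_Iic_of_hasDerivAt_of_tendsto' hderiv hint tendsto_gauss_atBot
  rw [this]; simp

lemma millsA {t : ℝ} (ht : 0 < t) :
    t * (Real.sqrt (2 * Real.pi) * (1 - stdNormalCDF t)) ≤ Real.exp (-t ^ 2 / 2) := by
  rw [cdf_compl]
  have e : t * (Real.sqrt (2 * Real.pi) * ((Real.sqrt (2 * Real.pi))⁻¹ *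
      ∫ s in Ioi t, Real.exp (-s ^ 2 / 2))) = t * ∫ s in Ioi t, Real.exp (-s ^ 2 / 2) := by
    rw [← mul_assoc (Real.sqrt (2 * Real.pi)), mul_inv_cancel₀ sqrt2pi_pos.ne', one_mul]
  rw [e, ← intIoi t, ← integral_const_mul]
  refine setIntegral_mono_on (gauss_integrable.const_mul t).integrableOn
    xgauss_integrable.integrableOn measurableSet_Ioi fun s hs => ?_
  have : t ≤ s := le_of_lt hs
  have he : 0 < Real.exp (-s ^ 2 / 2) := Real.exp_pos _
  nlinarith

lemma millsC {t : ℝ} (ht : t < 0) :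
    -t * (Real.sqrt (2 * Real.pi) * stdNormalCDF t) ≤ Real.exp (-t ^ 2 / 2) := by
  rw [cdf_eq]
  have e : -t * (Real.sqrt (2 * Real.pi) * ((Real.sqrt (2 * Real.pi))⁻¹ *
      ∫ s in Iic t, Real.exp (-s ^ 2 / 2))) = -t * ∫ s in Iic t, Real.exp (-s ^ 2 / 2) := by
    rw [← mul_assoc (Real.sqrt (2 * Real.pi)), mul_inv_cancel₀ sqrt2pi_pos.ne', one_mul]
  rw [e, ← intIic t, ← integral_const_mul]
  refine setIntegral_mono_on (gauss_integrable.const_mul (-t)).integrableOn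
    ((xgauss_integrable.neg).congr (Filter.EventuallyEq.of_eq (funext fun x => by simp))).integrableOn measurableSet_Iic
    fun s hs => ?_
  have hst : s ≤ t := hs
  have he : 0 < Real.exp (-s ^ 2 / 2) := Real.exp_pos _
  nlinarith

lemma shift_integrable (t : ℝ) : Integrable fun s : ℝ => Real.exp (-(s - t) ^ 2 / 2) :=
  gauss_integrable.comp_sub_right t

lemma shift_Ioi (t : ℝ) :
    ∫ s in Ioi t, Real.exp (-(s - t) ^ 2 / 2) = Real.sqrt (2 * Real.pi) / 2 := by
  have h := (measurePreserving_add_right (volume : Measure ℝ) t).setIntegral_preimage_emb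
    (measurableEmbedding_addRight t) (fun s => Real.exp (-(s - t) ^ 2 / 2)) (Ioi t)
  have hpre : (fun x : ℝ => x + t) ⁻¹' Ioi t = Ioi 0 := by
    ext x; simp
  rw [hpre] at h
  rw [← h, ← gauss_Ioi_zero]
  refine setIntegral_congr_fun measurableSet_Ioi fun x _ => ?_
  simp

lemma shift_Iic (t : ℝ) :
    ∫ s in Iic t, Real.exp (-(s - t) ^ 2 / 2) = Real.sqrt (2 * Real.pi) / 2 := by
  have h := (measurePreserving_add_right (volume : Measure ℝ) t).setIntegral_preimage_emb
    (measurableEmbedding_addRight t) (fun s => Real.exp (-(s - t) ^ 2 / 2)) (Iic t)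
  have hpre : (fun x : ℝ => x + t) ⁻¹' Iic t = Iic 0 := by
    ext x; simp
  rw [hpre] at h
  have h2 : ∫ x in Iic (0:ℝ), Real.exp (-(x + t - t) ^ 2 / 2)
      = ∫ x in Iic (0:ℝ), Real.exp (-x ^ 2 / 2) := by
    refine setIntegral_congr_fun measurableSet_Iic fun x _ => ?_
    simp
  have h3 := intervalIntegral.integral_Iic_add_Ioi (b := (0:ℝ))
    gauss_integrable.integrableOn gauss_integrable.integrableOn
  rw [gauss_total, gauss_Ioi_zero] at h3
  rw [← h, h2]
  linarith

lemma halfB {t : ℝ} (ht : 0 ≤ t) :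
    1 - stdNormalCDF t ≤ Real.exp (-t ^ 2 / 2) / 2 := by
  rw [cdf_compl]
  have key : ∫ s in Ioi t, Real.exp (-s ^ 2 / 2)
      ≤ ∫ s in Ioi t, Real.exp (-t ^ 2 / 2) * Real.exp (-(s - t) ^ 2 / 2) := by
    refine setIntegral_mono_on gauss_integrable.integrableOn
      ((shift_integrable t).const_mul _).integrableOn measurableSet_Ioi fun s hs => ?_
    rw [← Real.exp_add, Real.exp_le_exp]
    have hst : t ≤ s := le_of_lt hs
    nlinarith
  have h2 : ∫ s in Ioi t, Real.exp (-t ^ 2 / 2) * Real.exp (-(s - t) ^ 2 / 2)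
      = Real.exp (-t ^ 2 / 2) * (Real.sqrt (2 * Real.pi) / 2) := by
    rw [integral_const_mul, shift_Ioi]
  have h3 : 0 < Real.sqrt (2 * Real.pi) := sqrt2pi_pos
  calc (Real.sqrt (2 * Real.pi))⁻¹ * ∫ s in Ioi t, Real.exp (-s ^ 2 / 2)
      ≤ (Real.sqrt (2 * Real.pi))⁻¹ * (Real.exp (-t ^ 2 / 2) * (Real.sqrt (2 * Real.pi) / 2)) := by
        rw [← h2]; exact mul_le_mul_of_nonneg_left key (by positivity)
    _ = Real.exp (-t ^ 2 / 2) / 2 := by field_simp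

lemma halfD {t : ℝ} (ht : t ≤ 0) :
    stdNormalCDF t ≤ Real.exp (-t ^ 2 / 2) / 2 := by
  rw [cdf_eq]
  have key : ∫ s in Iic t, Real.exp (-s ^ 2 / 2)
      ≤ ∫ s in Iic t, Real.exp (-t ^ 2 / 2) * Real.exp (-(s - t) ^ 2 / 2) := by
    refine setIntegral_mono_on gauss_integrable.integrableOn
      ((shift_integrable t).const_mul _).integrableOn measurableSet_Iic fun s hs => ?_
    rw [← Real.exp_add, Real.exp_le_exp]
    have hst : s ≤ t := hs
    nlinarith
  have h2 : ∫ s in Iic t, Real.exp (-t ^ 2 / 2) * Real.exp (-(s - t) ^ 2 / 2)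
      = Real.exp (-t ^ 2 / 2) * (Real.sqrt (2 * Real.pi) / 2) := by
    rw [integral_const_mul, shift_Iic]
  have h3 : 0 < Real.sqrt (2 * Real.pi) := sqrt2pi_pos
  calc (Real.sqrt (2 * Real.pi))⁻¹ * ∫ s in Iic t, Real.exp (-s ^ 2 / 2)
      ≤ (Real.sqrt (2 * Real.pi))⁻¹ * (Real.exp (-t ^ 2 / 2) * (Real.sqrt (2 * Real.pi) / 2)) := by
        rw [← h2]; exact mul_le_mul_of_nonneg_left key (by positivity)
    _ = Real.exp (-t ^ 2 / 2) / 2 := by field_simp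

lemma exp_prod (t : ℝ) : Real.exp (t ^ 2 / 2) * Real.exp (-t ^ 2 / 2) = 1 := by
  rw [← Real.exp_add, show t ^ 2 / 2 + -t ^ 2 / 2 = 0 by ring, Real.exp_zero]

lemma expneg_le_one (t : ℝ) : Real.exp (-t ^ 2 / 2) ≤ 1 := by
  rw [show (1:ℝ) = Real.exp 0 from (Real.exp_zero).symm, Real.exp_le_exp]
  nlinarith [sq_nonneg t]

lemma K1 {t : ℝ} (ht : 0 < t) :
    t * (Real.sqrt (2 * Real.pi) * Real.exp (t ^ 2 / 2) * (1 - stdNormalCDF t)) ≤ 1 := by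
  have h := mul_le_mul_of_nonneg_left (millsA ht) (Real.exp_pos (t ^ 2 / 2)).le
  nlinarith [exp_prod t]

lemma K2 {t : ℝ} (ht : t < 0) :
    -t * (Real.sqrt (2 * Real.pi) * Real.exp (t ^ 2 / 2) * stdNormalCDF t) ≤ 1 := by
  have h := mul_le_mul_of_nonneg_left (millsC ht) (Real.exp_pos (t ^ 2 / 2)).le
  nlinarith [exp_prod t]

lemma K3 {t : ℝ} (ht : t ≤ 0) : Real.exp (t ^ 2 / 2) * stdNormalCDF t ≤ 1 / 2 := by
  have h := mul_le_mul_of_nonneg_left (halfD ht) (Real.exp_pos (t ^ 2 / 2)).le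
  nlinarith [exp_prod t]

lemma K4 {t : ℝ} (ht : 0 ≤ t) : Real.exp (t ^ 2 / 2) * (1 - stdNormalCDF t) ≤ 1 / 2 := by
  have h := mul_le_mul_of_nonneg_left (halfB ht) (Real.exp_pos (t ^ 2 / 2)).le
  nlinarith [exp_prod t]

lemma K5 {t : ℝ} (ht : 0 < t) : t * (Real.sqrt (2 * Real.pi) * (1 - stdNormalCDF t)) ≤ 1 := by
  have h := millsA ht
  linarith [expneg_le_one t]

lemma K6 {t : ℝ} (ht : t < 0) : -t * (Real.sqrt (2 * Real.pi) * stdNormalCDF t) ≤ 1 := by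
  have h := millsC ht
  linarith [expneg_le_one t]

/-- The standard solution of the Stein equation at level `z`. -/
noncomputable def steinSolution (z w : ℝ) : ℝ :=
  if w ≤ z then
    Real.sqrt (2 * Real.pi) * Real.exp (w ^ 2 / 2) * stdNormalCDF w * (1 - stdNormalCDF z)
  else
    Real.sqrt (2 * Real.pi) * Real.exp (w ^ 2 / 2) * stdNormalCDF z * (1 - stdNormalCDF w)

lemma stein_nonneg (z w : ℝ) : 0 ≤ steinSolution z w := by
  unfold steinSolution
  have h1 := cdf_nonneg z; have h2 := cdf_le_one z
  have h3 := cdf_nonneg w; have h4 := cdf_le_one w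
  split_ifs
  · exact mul_nonneg (mul_nonneg (mul_nonneg sqrt2pi_pos.le (Real.exp_pos _).le) h3)
      (by linarith)
  · exact mul_nonneg (mul_nonneg (mul_nonneg sqrt2pi_pos.le (Real.exp_pos _).le) h1)
      (by linarith)

theorem abs_z_mul_stein_solution_le_one (z w : ℝ) : |z * steinSolution z w| ≤ 1 := by
  have hPz0 := cdf_nonneg z; have hPz1 := cdf_le_one z
  have hPw0 := cdf_nonneg w; have hPw1 := cdf_le_one w
  have hg := sqrt2pi_pos
  have hEw : (0:ℝ) < Real.exp (w ^ 2 / 2) := Real.exp_pos _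
  have hEz : (0:ℝ) < Real.exp (z ^ 2 / 2) := Real.exp_pos _
  have hf := stein_nonneg z w
  rw [abs_mul, abs_of_nonneg hf]
  unfold steinSolution
  split_ifs with hwz
  · rcases lt_trichotomy z 0 with hz0 | rfl | hz0
    · -- z < 0, w ≤ z
      rw [abs_of_neg hz0]
      have hw0 : w < 0 := lt_of_le_of_lt hwz hz0
      have k := K2 hw0
      nlinarith [mul_nonneg (mul_nonneg hg.le hEw.le) hPw0,
        mul_nonneg (mul_nonneg (mul_nonneg hg.le hEw.le) hPw0) (sub_nonneg.2 hPz1),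
        mul_nonneg (mul_nonneg (mul_nonneg hg.le hEw.le) hPw0) (sub_nonneg.2 hwz)]
    · norm_num
    · rw [abs_of_pos hz0]
      rcases le_or_gt 0 w with hw0 | hw0
      · have k := K1 hz0
        have hEwz : Real.exp (w ^ 2 / 2) ≤ Real.exp (z ^ 2 / 2) := by
          rw [Real.exp_le_exp]; nlinarith
        nlinarith [mul_le_mul hEwz hPw1 hPw0 hEz.le,
          mul_nonneg (mul_pos hz0 hg).le (sub_nonneg.2 hPz1)]
      · have k5 := K5 hz0
        have k3 := K3 hw0.le
        nlinarith [mul_nonneg (mul_pos hz0 hg).le (sub_nonneg.2 hPz1),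
          mul_nonneg hEw.le hPw0]
  · have hzw : z < w := not_le.1 hwz
    rcases lt_trichotomy z 0 with hz0 | rfl | hz0
    · rw [abs_of_neg hz0]
      rcases le_or_gt w 0 with hw0 | hw0
      · have k := K2 hz0
        have hEwz : Real.exp (w ^ 2 / 2) ≤ Real.exp (z ^ 2 / 2) := by
          rw [Real.exp_le_exp]; nlinarith
        nlinarith [mul_le_mul_of_nonneg_right hEwz hPz0,
          mul_nonneg (mul_nonneg (neg_pos.2 hz0).le hg.le) (sub_nonneg.2 hPw1),
          mul_nonneg (mul_nonneg (mul_nonneg (neg_pos.2 hz0).le hg.le) hEz.le) hPz0]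
      · have k6 := K6 hz0
        have k4 := K4 hw0.le
        nlinarith [mul_nonneg (mul_pos (neg_pos.2 hz0) hg).le hPz0,
          mul_nonneg hEw.le (sub_nonneg.2 hPw1)]
    · norm_num
    · rw [abs_of_pos hz0]
      have hw0 : 0 < w := lt_trans hz0 hzw
      have k := K1 hw0
      nlinarith [mul_nonneg (mul_nonneg (mul_nonneg hg.le hEw.le) hPz0) (sub_nonneg.2 hPw1),
        mul_nonneg (mul_nonneg hg.le hEw.le) (sub_nonneg.2 hPw1),
        mul_nonneg (mul_nonneg (mul_nonneg hg.le hEw.le) (sub_nonneg.2 hPw1)) (sub_nonneg.2 hzw.le)]
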